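/- The assignment g1 -> (1 2), g2 -> (1 3), g3 -> (3 4), g4 -> (2 3), g5 -> (4 5) respects all the defining relations of G_II and hence extends to a group homomorphism rho' : G_II -> S_5, and this homomorphism is surjective. -/
import Mathlib


namespace Stmt7

/-- Generators: `i ↦ g(i+1)` for `i = 0,…,4`. -/
def g (i : Fin 5) : FreeGroup (Fin 5) := FreeGroup.of i

/-- The braid relator `x y x (y x y)⁻¹`, i.e. `<x,y> = e`. -/
def braid (x y : FreeGroup (Fin 5)) : FreeGroup (Fin 5) := x * y * x * (y * x * y)⁻¹

/-- The commutator relator `x y x⁻¹ y⁻¹`, i.e. `[x,y] = e`. -/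
def comm (x y : FreeGroup (Fin 5)) : FreeGroup (Fin 5) := x * y * x⁻¹ * y⁻¹

/-- Relators of the group `G_II` from Theorem 3.5 (union of the Cayley cubic degeneration
and two planes, Type II). -/
def rels : Set (FreeGroup (Fin 5)) :=
  { (g 0) ^ 2, (g 1) ^ 2, (g 2) ^ 2, (g 3) ^ 2, (g 4) ^ 2,
    comm (g 0) (g 2), comm (g 0) (g 4), comm (g 1) (g 4),
    comm (g 0) (g 1 * g 3 * g 1), comm (g 3) (g 4),
    braid (g 0) (g 1), braid (g 1) (g 2), braid (g 1) (g 3),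
    braid (g 2) (g 3), braid (g 2) (g 4) }

/-- The presented group `G_II`. -/
abbrev GII := PresentedGroup rels

/-- The assignment on the generators. -/
def f : Fin 5 → Equiv.Perm (Fin 5) :=
  ![Equiv.swap 0 1, Equiv.swap 0 2, Equiv.swap 2 3, Equiv.swap 1 2, Equiv.swap 3 4]

lemma rels_hold : ∀ r ∈ rels, FreeGroup.lift f r = 1 := by
  rintro r (rfl|rfl|rfl|rfl|rfl|rfl|rfl|rfl|rfl|rfl|rfl|rfl|rfl|rfl|rfl) <;>
    simp only [g, braid, comm, map_mul, map_inv, map_pow, FreeGroup.lift_apply_of] <;>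
    decide

/-- Theorem 3.5 (first step): the assignment `g1 ↦ (1 2)`, `g2 ↦ (1 3)`, `g3 ↦ (3 4)`,
`g4 ↦ (2 3)`, `g5 ↦ (4 5)` extends to a group homomorphism `ρ' : G_II → S₅`, which is
surjective. -/
theorem exists_surjective_hom :
    ∃ ρ' : GII →* Equiv.Perm (Fin 5),
      ρ' (PresentedGroup.of 0) = Equiv.swap 0 1 ∧
      ρ' (PresentedGroup.of 1) = Equiv.swap 0 2 ∧
      ρ' (PresentedGroup.of 2) = Equiv.swap 2 3 ∧
      ρ' (PresentedGroup.of 3) = Equiv.swap 1 2 ∧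
      ρ' (PresentedGroup.of 4) = Equiv.swap 3 4 ∧
      Function.Surjective ρ' := by
  refine ⟨PresentedGroup.toGroup rels_hold, PresentedGroup.toGroup.of rels_hold,
    PresentedGroup.toGroup.of rels_hold, PresentedGroup.toGroup.of rels_hold,
    PresentedGroup.toGroup.of rels_hold, PresentedGroup.toGroup.of rels_hold, ?_⟩
  set ρ := PresentedGroup.toGroup (f := f) rels_hold
  rw [← MonoidHom.range_eq_top]
  rw [eq_top_iff]
  have h := Equiv.Perm.mclosure_swap_castSucc_succ 4
  have hle : Submonoid.closure (Set.range fun i : Fin 4 ↦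
      Equiv.swap i.castSucc i.succ) ≤ ρ.range.toSubmonoid := by
    rw [Submonoid.closure_le]
    rintro _ ⟨i, rfl⟩
    fin_cases i
    · exact ⟨PresentedGroup.of 0, PresentedGroup.toGroup.of rels_hold⟩
    · exact ⟨PresentedGroup.of 3, PresentedGroup.toGroup.of rels_hold⟩
    · exact ⟨PresentedGroup.of 2, PresentedGroup.toGroup.of rels_hold⟩
    · exact ⟨PresentedGroup.of 4, PresentedGroup.toGroup.of rels_hold⟩
  intro x _
  exact hle (h ▸ Submonoid.mem_top x)

end Stmt7
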